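/- The canonical bristled module C has no submodule with dimension vector (2,1): there is no pair of subspaces U₁ ⊆ C₁, U₂ ⊆ C₂ with dim U₁ = 2, dim U₂ = 1 and α_i(U₁) ⊆ U₂ for all i = 1, …, n. -/

import Mathlib

/-!
The canonical bristled `n`-Kronecker module `C = (C₁, C₂; α₁, …, α_n)`:
`C₂ = Fin n → k` with standard basis `c_i`, and `C₁ = Sym2 (Fin n) → k` with
standard basis `c_{ij}` indexed by unordered pairs `{i,j}`.
`α_r` is given by `(α_r x) i = x {i, r}`, i.e. `α_r(c_{ij}) = c_j` if `r = i`,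
`c_i` if `r = j`, and `0` if `r ∉ {i,j}`.
A submodule of `C` is a pair of subspaces `(U₁ ⊆ C₁, U₂ ⊆ C₂)` with
`α_r(U₁) ⊆ U₂` for all `r`.
-/

/-- The structure map `α_r : C₁ → C₂` of the canonical bristled module. -/
def canAlpha (k : Type*) [Field k] (n : ℕ) (r : Fin n) :
    (Sym2 (Fin n) → k) →ₗ[k] (Fin n → k) where
  toFun x i := x (Sym2.mk i r)
  map_add' _ _ := rfl
  map_smul' _ _ := rfl

/-- The canonical bristled module `C` has no submodule with
dimension vector `(2,1)`: there is no pair of subspaces `U₁ ⊆ C₁`, `U₂ ⊆ C₂`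
with `dim U₁ = 2`, `dim U₂ = 1` and `α_r(U₁) ⊆ U₂` for all `r`. -/
theorem no_submodule_of_dimension_vector_two_one
    {k : Type*} [Field k] {n : ℕ} (hn : 1 ≤ n) :
    ¬ ∃ (U₁ : Submodule k (Sym2 (Fin n) → k)) (U₂ : Submodule k (Fin n → k)),
        Module.finrank k U₁ = 2 ∧ Module.finrank k U₂ = 1 ∧
        ∀ r, U₁.map (canAlpha k n r) ≤ U₂ := by
  rintro ⟨U₁, U₂, h1, h2, hmap⟩
  -- U₂ is spanned by a nonzero vector v
  obtain ⟨v, hv0, hv⟩ := (finrank_eq_one_iff' (K := k) (V := U₂)).mp h2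
  have hv0' : (v : Fin n → k) ≠ 0 := fun h => hv0 (Subtype.ext h)
  obtain ⟨j, hj⟩ : ∃ j, (v : Fin n → k) j ≠ 0 := by
    by_contra h; push_neg at h; exact hv0' (funext h)
  -- the candidate spanning vector of U₁
  set x₀ : Sym2 (Fin n) → k :=
    Sym2.lift ⟨fun i r => (v : Fin n → k) i * (v : Fin n → k) r,
      fun i r => mul_comm _ _⟩ with hx₀
  -- every element of U₁ is a multiple of x₀
  have key : U₁ ≤ Submodule.span k {x₀} := by
    intro x hx
    -- for each r, α_r x = c r • v
    have hc : ∀ r : Fin n, ∃ c : k, ∀ i,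
        x (Sym2.mk i r) = c * (v : Fin n → k) i := by
      intro r
      have hmem : canAlpha k n r x ∈ U₂ :=
        hmap r ⟨x, hx, rfl⟩
      obtain ⟨c, hcv⟩ := hv ⟨_, hmem⟩
      refine ⟨c, fun i => ?_⟩
      have := congrFun (congrArg Subtype.val hcv) i
      simpa [canAlpha] using this.symm
    choose c hcspec using hc
    have hsym : ∀ i r : Fin n,
        c r * (v : Fin n → k) i = c i * (v : Fin n → k) r := by
      intro i r
      have h1' := hcspec r i
      have h2' := hcspec i r
      have : Sym2.mk i r = Sym2.mk r i := Sym2.eq_swap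
      rw [← h1', this, h2']
    rw [Submodule.mem_span_singleton]
    refine ⟨c j / (v : Fin n → k) j, ?_⟩
    funext p
    induction p using Sym2.ind with
    | _ i r =>
      have hcr : c r * (v : Fin n → k) j = c j * (v : Fin n → k) r := hsym j r
      have : (c j / (v : Fin n → k) j) • x₀ (Sym2.mk i r)
          = c r * (v : Fin n → k) i := by
        simp only [hx₀, Sym2.lift_mk, smul_eq_mul]
        field_simp
        linear_combination (-((v : Fin n → k) i)) * hcr
      rw [Pi.smul_apply, this, hcspec r i]
  have hle : Module.finrank k U₁ ≤ Module.finrank k (Submodule.span k {x₀}) :=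
    Submodule.finrank_mono key
  have : Module.finrank k (Submodule.span k ({x₀} : Set (Sym2 (Fin n) → k))) ≤ 1 := by
    simpa using finrank_span_le_card (R := k) ({x₀} : Set (Sym2 (Fin n) → k))
  omega
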